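/- Let p : X → P be a topological submersion of relative dimension d, meaning every point x ∈ X admits an open neighborhood of the form U × N with U a d-dimensional topological manifold and N open in P, via a homeomorphism over P onto a neighborhood of x. Then the quadruple (X, X ×_P X, Δ, π₂), where Δ : X → X ×_P X is the diagonal and π₂ the second projection, is a d-dimensional topological microbundle over X (the vertical tangent microbundle). -/
import Mathlib


universe u

/-- `p : X → P` is a topological submersion of relative dimension `d`: every point of `X` has
a neighborhood of the form `U × N`, with `U` a `d`-dimensional topological manifold and `N`
open in `P`, via a homeomorphism over `P` onto a neighborhood of the point. -/
def IsTopSubmersion {X P : Type u} [TopologicalSpace X] [TopologicalSpace P]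
    (p : X → P) (d : ℕ) : Prop :=
  Continuous p ∧
    ∀ x : X, ∃ (U : Type u) (_ : TopologicalSpace U)
      (_ : ChartedSpace (EuclideanSpace ℝ (Fin d)) U) (N : Set P),
      IsOpen N ∧ p x ∈ N ∧
      ∃ (W : Set X) (f : (U × ↥N) ≃ₜ ↥W), IsOpen W ∧ x ∈ W ∧
        ∀ z : U × ↥N, p ((f z : X)) = (z.2 : P)

/-- `(B, E, i, p)` is a `d`-dimensional topological microbundle. -/
def IsMicrobundle (d : ℕ) {B E : Type u} [TopologicalSpace B] [TopologicalSpace E]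
    (i : B → E) (p : E → B) : Prop :=
  Continuous i ∧ Continuous p ∧ (∀ b, p (i b) = b) ∧
    ∀ b : B, ∃ (U : Set B) (V : Set E), IsOpen U ∧ b ∈ U ∧ IsOpen V ∧ i b ∈ V ∧
      ∃ φ : ((Fin d → ℝ) × ↥U) ≃ₜ ↥V,
        (∀ u : U, (φ (0, u) : E) = i (u : B)) ∧
        ∀ z : (Fin d → ℝ) × ↥U, p ((φ z : E)) = (z.2 : B)

noncomputable def ballHomeo {E : Type u} [NormedAddCommGroup E] [NormedSpace ℝ E]
    (y₀ : E) (ε : ℝ) (hε : 0 < ε) : E ≃ₜ ↥(Metric.ball y₀ ε) :=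
  Homeomorph.unitBall.trans
    { toFun := fun b => ⟨y₀ + ε • (b : E), by
        rw [Metric.mem_ball, dist_eq_norm, add_sub_cancel_left, norm_smul,
          Real.norm_of_nonneg hε.le]
        calc ε * ‖(b : E)‖ < ε * 1 := by
              have := mem_ball_zero_iff.1 b.2
              exact mul_lt_mul_of_pos_left this hε
          _ = ε := mul_one ε⟩
      invFun := fun z => ⟨ε⁻¹ • ((z : E) - y₀), by
        rw [mem_ball_zero_iff, norm_smul, Real.norm_of_nonneg (inv_pos.2 hε).le]
        have hz : ‖(z : E) - y₀‖ < ε := by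
          have := z.2; rwa [Metric.mem_ball, dist_eq_norm] at this
        calc ε⁻¹ * ‖(z : E) - y₀‖ < ε⁻¹ * ε := mul_lt_mul_of_pos_left hz (inv_pos.2 hε)
          _ = 1 := inv_mul_cancel₀ hε.ne'⟩
      left_inv := fun b => by
        ext; simp [smul_smul, inv_mul_cancel₀ hε.ne']
      right_inv := fun z => by
        ext; simp [smul_smul, mul_inv_cancel₀ hε.ne']
      continuous_toFun := by
        exact (continuous_const.add (continuous_const.smul continuous_subtype_val)).subtype_mk _
      continuous_invFun := by
        exact (continuous_const.smul (continuous_subtype_val.sub continuous_const)).subtype_mk _ }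


/-- If `p : X → P` is a topological submersion of relative dimension `d`, then
`(X, X ×_P X, Δ, π₂)` is a `d`-dimensional topological microbundle over `X`
(the vertical tangent microbundle). -/
theorem verticalTangentMicrobundle {X P : Type u} [TopologicalSpace X] [TopologicalSpace P]
    (p : X → P) (d : ℕ) (hp : IsTopSubmersion p d) :
    IsMicrobundle d
      (fun x : X => (⟨(x, x), rfl⟩ : {q : X × X // p q.1 = p q.2}))
      (fun q : {q : X × X // p q.1 = p q.2} => q.1.2) := by
  obtain ⟨hpc, hloc⟩ := hp
  refine ⟨(continuous_id.prodMk continuous_id).subtype_mk _,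
    continuous_snd.comp continuous_subtype_val, fun b => rfl, ?_⟩
  intro x
  obtain ⟨U₀, tU₀, cs, N, hNopen, hpxN, W, f, hWopen, hxW, hpf⟩ := hloc x
  classical
  -- the chart at the point of `U₀` over `x`
  let q₀ : U₀ × ↥N := f.symm ⟨x, hxW⟩
  let c := chartAt (EuclideanSpace ℝ (Fin d)) q₀.1
  have hu₀ : q₀.1 ∈ c.source := mem_chart_source _ q₀.1
  have hy₀ : c q₀.1 ∈ c.target := c.map_source hu₀
  obtain ⟨ε, hε, hball⟩ := Metric.isOpen_iff.1 c.open_target _ hy₀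
  set B : Set (EuclideanSpace ℝ (Fin d)) := Metric.ball (c q₀.1) ε with hBdef
  set D : Set U₀ := c.source ∩ c ⁻¹' B with hDdef
  have hDopen : IsOpen D := c.continuousOn.isOpen_inter_preimage c.open_source Metric.isOpen_ball
  have hDsource : D ⊆ c.source := Set.inter_subset_left
  have hsymmD : ∀ z ∈ B, c.symm z ∈ D := fun z hz =>
    ⟨c.map_target (hball hz), by
      have : c (c.symm z) = z := c.right_inv (hball hz)
      simp only [Set.mem_preimage, this]; exact hz⟩
  have hu₀D : q₀.1 ∈ D := ⟨hu₀, Metric.mem_ball_self hε⟩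
  -- homeomorphisms
  let T : EuclideanSpace ℝ (Fin d) ≃ₜ ↥B := ballHomeo _ ε hε
  let e₁ : (Fin d → ℝ) ≃ₜ EuclideanSpace ℝ (Fin d) :=
    (EuclideanSpace.equiv (Fin d) ℝ).toHomeomorph.symm
  -- the base neighbourhood
  set WD : Set X := Subtype.val '' (f.symm ⁻¹' (D ×ˢ (Set.univ : Set ↥N))) with hWDdef
  have hWDopen : IsOpen WD :=
    hWopen.isOpenMap_subtype_val _ ((hDopen.prod isOpen_univ).preimage f.symm.continuous)
  have hWDsub : WD ⊆ W := fun y hy => by obtain ⟨y', _, rfl⟩ := hy; exact y'.2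
  have hWD : ∀ (y : X) (hy : y ∈ WD), (f.symm ⟨y, hWDsub hy⟩).1 ∈ D := by
    intro y hy
    obtain ⟨y', hy', rfl⟩ := hy
    exact hy'.1
  have hmemWD : ∀ (a : U₀) (_ : a ∈ D) (n : ↥N), (f (a, n) : X) ∈ WD := by
    intro a ha n
    refine ⟨f (a, n), ?_, rfl⟩
    simp only [Set.mem_preimage, f.symm_apply_apply]
    exact ⟨ha, trivial⟩
  have hxWD : x ∈ WD := by
    have := hmemWD q₀.1 hu₀D q₀.2
    rw [show ((q₀.1, q₀.2) : U₀ × ↥N) = q₀ from rfl, f.apply_symm_apply] at this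
    exact this
  -- `p` on `W` is the second coordinate
  have hpW : ∀ (y : X) (h : y ∈ W), p y = ((f.symm ⟨y, h⟩).2 : P) := by
    intro y h
    have := hpf (f.symm ⟨y, h⟩)
    rwa [f.apply_symm_apply] at this
  -- the chart maps
  let g : (Fin d → ℝ) × ↥WD → ↥W := fun z =>
    f (c.symm (T (e₁ z.1 + (T.symm ⟨c (f.symm ⟨z.2.1, hWDsub z.2.2⟩).1,
        (hWD _ z.2.2).2⟩ : EuclideanSpace ℝ (Fin d))) : EuclideanSpace ℝ (Fin d)),
      (f.symm ⟨z.2.1, hWDsub z.2.2⟩).2)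
  have hgD : ∀ z : (Fin d → ℝ) × ↥WD,
      (c.symm (T (e₁ z.1 + (T.symm ⟨c (f.symm ⟨z.2.1, hWDsub z.2.2⟩).1,
        (hWD _ z.2.2).2⟩ : EuclideanSpace ℝ (Fin d))) : EuclideanSpace ℝ (Fin d))) ∈ D :=
    fun z => hsymmD _ (T _).2
  have hgWD : ∀ z : (Fin d → ℝ) × ↥WD, (g z : X) ∈ WD := fun z => hmemWD _ (hgD z) _
  have hpg : ∀ z : (Fin d → ℝ) × ↥WD, p (g z : X) = p z.2.1 := by
    intro z
    have h1 := hpf (c.symm (T (e₁ z.1 + (T.symm ⟨c (f.symm ⟨z.2.1, hWDsub z.2.2⟩).1,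
        (hWD _ z.2.2).2⟩ : EuclideanSpace ℝ (Fin d))) : EuclideanSpace ℝ (Fin d)),
      (f.symm ⟨z.2.1, hWDsub z.2.2⟩).2)
    have h2 := hpW z.2.1 (hWDsub z.2.2)
    rw [h2]
    exact h1
  let tF : (Fin d → ℝ) × ↥WD → ↥(Subtype.val ⁻¹' (WD ×ˢ WD) :
      Set {q : X × X // p q.1 = p q.2}) := fun z =>
    ⟨⟨((g z : X), z.2.1), hpg z⟩, ⟨hgWD z, z.2.2⟩⟩
  let iF : ↥(Subtype.val ⁻¹' (WD ×ˢ WD) : Set {q : X × X // p q.1 = p q.2}) →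
      (Fin d → ℝ) × ↥WD := fun z =>
    (e₁.symm ((T.symm ⟨c (f.symm ⟨z.1.1.1, hWDsub z.2.1⟩).1,
        (hWD _ z.2.1).2⟩ : EuclideanSpace ℝ (Fin d)) -
      (T.symm ⟨c (f.symm ⟨z.1.1.2, hWDsub z.2.2⟩).1,
        (hWD _ z.2.2).2⟩ : EuclideanSpace ℝ (Fin d))),
      ⟨z.1.1.2, z.2.2⟩)
  -- helper rewrite lemmas
  have he : e₁ (0 : Fin d → ℝ) = (0 : EuclideanSpace ℝ (Fin d)) := by
    unfold e₁; simp
  have hcB : ∀ b : ↥B, c (c.symm (b : EuclideanSpace ℝ (Fin d))) = (b : EuclideanSpace ℝ (Fin d)) :=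
    fun b => c.right_inv (hball b.2)
  have hcsymmc : ∀ (y : X) (hy : y ∈ WD),
      c.symm (c (f.symm ⟨y, hWDsub hy⟩).1) = (f.symm ⟨y, hWDsub hy⟩).1 :=
    fun y hy => c.left_inv (hDsource (hWD y hy))
  -- the two inverse laws
  have hli : Function.LeftInverse iF tF := by
    intro z
    obtain ⟨v, w⟩ := z
    unfold iF tF g
    refine Prod.ext ?_ rfl
    simp only [Subtype.coe_eta, Homeomorph.symm_apply_apply, hcB, add_sub_cancel_right]
  have hri : Function.RightInverse iF tF := by
    intro z
    refine Subtype.ext (Subtype.ext (Prod.ext ?_ rfl))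
    show (g (iF z) : X) = z.1.1.1
    unfold g iF
    simp only [Subtype.coe_eta, Homeomorph.apply_symm_apply, sub_add_cancel, hcsymmc]
    have hq : (f.symm ⟨z.1.1.2, hWDsub z.2.2⟩).2 = (f.symm ⟨z.1.1.1, hWDsub z.2.1⟩).2 := by
      apply Subtype.ext
      rw [← hpW _ (hWDsub z.2.1), ← hpW _ (hWDsub z.2.2)]
      exact z.1.2.symm
    rw [hq, hcsymmc _ z.2.1, Prod.mk.eta, f.apply_symm_apply]
  -- continuity of the two maps
  have hq : Continuous fun z : (Fin d → ℝ) × ↥WD => f.symm ⟨z.2.1, hWDsub z.2.2⟩ :=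
    f.symm.continuous.comp ((continuous_subtype_val.comp continuous_snd).subtype_mk _)
  have hc1 : Continuous fun z : (Fin d → ℝ) × ↥WD =>
      (⟨c (f.symm ⟨z.2.1, hWDsub z.2.2⟩).1, (hWD _ z.2.2).2⟩ : ↥B) :=
    (c.continuousOn.comp_continuous (continuous_fst.comp hq)
      fun z => hDsource (hWD _ z.2.2)).subtype_mk _
  have hs : Continuous fun z : (Fin d → ℝ) × ↥WD =>
      e₁ z.1 + (T.symm ⟨c (f.symm ⟨z.2.1, hWDsub z.2.2⟩).1, (hWD _ z.2.2).2⟩ :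
        EuclideanSpace ℝ (Fin d)) :=
    (e₁.continuous.comp continuous_fst).add (T.symm.continuous.comp hc1)
  have hgc : Continuous g := by
    unfold g
    exact f.continuous.comp
      ((c.continuousOn_symm.comp_continuous
          (continuous_subtype_val.comp (T.continuous.comp hs)) fun z => hball (T _).2).prodMk
        (continuous_snd.comp hq))
  have htF : Continuous tF := by
    unfold tF
    exact (((continuous_subtype_val.comp hgc).prodMk
      (continuous_subtype_val.comp continuous_snd)).subtype_mk _).subtype_mk _
  have hiF : Continuous iF := by
    unfold iF
    have k0 : Continuous fun z : ↥(Subtype.val ⁻¹' (WD ×ˢ WD) :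
        Set {q : X × X // p q.1 = p q.2}) => (z.1.1 : X × X) :=
      continuous_subtype_val.comp continuous_subtype_val
    have k1 : Continuous fun z : ↥(Subtype.val ⁻¹' (WD ×ˢ WD) :
        Set {q : X × X // p q.1 = p q.2}) => f.symm ⟨z.1.1.1, hWDsub z.2.1⟩ :=
      f.symm.continuous.comp ((continuous_fst.comp k0).subtype_mk _)
    have k2 : Continuous fun z : ↥(Subtype.val ⁻¹' (WD ×ˢ WD) :
        Set {q : X × X // p q.1 = p q.2}) => f.symm ⟨z.1.1.2, hWDsub z.2.2⟩ :=
      f.symm.continuous.comp ((continuous_snd.comp k0).subtype_mk _)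
    have k1b : Continuous fun z : ↥(Subtype.val ⁻¹' (WD ×ˢ WD) :
        Set {q : X × X // p q.1 = p q.2}) =>
        (T.symm ⟨c (f.symm ⟨z.1.1.1, hWDsub z.2.1⟩).1, (hWD _ z.2.1).2⟩ :
          EuclideanSpace ℝ (Fin d)) :=
      T.symm.continuous.comp ((c.continuousOn.comp_continuous (continuous_fst.comp k1)
        fun z => hDsource (hWD _ z.2.1)).subtype_mk _)
    have k2b : Continuous fun z : ↥(Subtype.val ⁻¹' (WD ×ˢ WD) :
        Set {q : X × X // p q.1 = p q.2}) =>
        (T.symm ⟨c (f.symm ⟨z.1.1.2, hWDsub z.2.2⟩).1, (hWD _ z.2.2).2⟩ :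
          EuclideanSpace ℝ (Fin d)) :=
      T.symm.continuous.comp ((c.continuousOn.comp_continuous (continuous_fst.comp k2)
        fun z => hDsource (hWD _ z.2.2)).subtype_mk _)
    exact (e₁.symm.continuous.comp (k1b.sub k2b)).prodMk
      ((continuous_snd.comp k0).subtype_mk _)
  refine ⟨WD, Subtype.val ⁻¹' (WD ×ˢ WD), hWDopen, hxWD,
    (hWDopen.prod hWDopen).preimage continuous_subtype_val, ⟨hxWD, hxWD⟩,
    ⟨⟨tF, iF, hli, hri⟩, htF, hiF⟩, ?_, ?_⟩
  · intro u
    refine Subtype.ext (Prod.ext ?_ rfl)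
    show (g (0, u) : X) = u.1
    unfold g
    simp only [he, zero_add, Homeomorph.apply_symm_apply, Subtype.coe_eta, hcsymmc,
      Prod.mk.eta]
    rw [hcsymmc _ u.2, Prod.mk.eta, f.apply_symm_apply]
  · intro z
    rfl
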